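/- arXiv:math/0310097 — 5 statements merged into one kernel-verified Lean document; each statement's English description precedes it below -/
import Mathlib

section
/- (Proposition 3.2) Let G be a group, H a subgroup, Q a left transversal of H containing e, π : G → Q the projection, and x × y = π(x·y) the loop operation on Q. Fix u ∈ Q. Define Ψ_u : Q → Q·u⁻¹ by Ψ_u(x) = (u × x)·u⁻¹ = π(u·x)·u⁻¹, define the product ∗_u on Q·u⁻¹ by a ∗_u b = π(a·b·u)·u⁻¹ (this is the projection of a·b onto the section Q·u⁻¹ parallel to the subgroup u·H·u⁻¹), and define x ·_u y = π(u⁻¹·((u × x) × y)) (so that u × (x ·_u y) = (u × x) × y). Then Ψ_u is an isomorphism of these operations: for all x, y ∈ Q, Ψ_u(x ·_u y) = Ψ_u(x) ∗_u Ψ_u(y). -/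
/-- Proposition 3.2: `Ψ_u : x ↦ (u × x) * u⁻¹` is an isomorphism from
`⟨Q, ·_u, e⟩` (where `x ·_u y = u \ ((u × x) × y)`) onto `⟨Q * u⁻¹, ∗_u, e⟩`
(where `a ∗_u b = π (a * b * u) * u⁻¹` is the projection of `a * b` onto the
section `Q * u⁻¹` parallel to `u * H * u⁻¹`). -/
theorem psi_u_isomorphism
    {G : Type*} [Group G] (H : Subgroup G) (Q : Set G)
    (heQ : (1 : G) ∈ Q)
    (π : G → G)
    (hπQ : ∀ g : G, π g ∈ Q)
    (hπH : ∀ g : G, (π g)⁻¹ * g ∈ H)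
    (hπuniq : ∀ g : G, ∀ q ∈ Q, q⁻¹ * g ∈ H → q = π g)
    (u : G) (hu : u ∈ Q) :
    ∀ x ∈ Q, ∀ y ∈ Q,
      π (u * π (u⁻¹ * π (π (u * x) * y))) * u⁻¹ =
        π ((π (u * x) * u⁻¹) * (π (u * y) * u⁻¹) * u) * u⁻¹ := by
  intro x hx y hy
  have hQfix : ∀ q, q ∈ Q → π q = q := fun q hq => (hπuniq q q hq (by simpa using H.one_mem)).symm
  have hHinv : ∀ g h, h ∈ H → π (g * h) = π g := fun g h hh =>
    (hπuniq (g * h) (π g) (hπQ g)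
      (by rw [show (π g)⁻¹ * (g * h) = ((π g)⁻¹ * g) * h by group]
          exact H.mul_mem (hπH g) hh)).symm
  set A := π (π (u * x) * y) with hA
  have h1 : u * π (u⁻¹ * A) = A * ((π (u⁻¹ * A))⁻¹ * (u⁻¹ * A))⁻¹ := by group
  have hLHS : π (u * π (u⁻¹ * A)) = A := by
    rw [h1, hHinv _ _ (H.inv_mem (hπH _)), hQfix A (hπQ _)]
  have h2 : (π (u * x) * u⁻¹) * (π (u * y) * u⁻¹) * u
      = (π (u * x) * y) * ((π (u * y))⁻¹ * (u * y))⁻¹ := by group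
  have hRHS : π ((π (u * x) * u⁻¹) * (π (u * y) * u⁻¹) * u) = A := by
    rw [h2, hHinv _ _ (H.inv_mem (hπH _))]
  rw [hLHS, hRHS]
end

section
/- (Proposition 3.3) Let G be a group, H a subgroup, Q a left transversal of H containing e, π : G → Q the projection, and x × y = π(x·y) the loop operation on Q. Fix v ∈ Q and assume in addition that Q is a left transversal of the conjugate subgroup v·H·v⁻¹, with associated projection π''_v : G → Q (π''_v(g) is the unique element q ∈ Q with q⁻¹·g ∈ v·H·v⁻¹). Then for all x, y ∈ Q the element z = π''_v(x·y) satisfies z × v = x × (y × v); in other words, the composition law x ⊥_v y := (x × (y × v))/v obtained by right division by v coincides with the projection of x·y onto Q parallel to v·H·v⁻¹. -/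
/-- Proposition 3.3: if `Q` is in addition a left transversal of the
conjugate subgroup `v * H * v⁻¹` with projection `π''_v : G → Q`, then for all
`x, y ∈ Q` the element `z = π''_v (x * y)` satisfies `z × v = x × (y × v)`,
i.e. the law `x ⊥_v y = (x × (y × v)) / v` coincides with the projection of
`x * y` onto `Q` parallel to `v * H * v⁻¹`. -/
theorem proj_conj_composition
    {G : Type*} [Group G] (H : Subgroup G) (Q : Set G)
    (heQ : (1 : G) ∈ Q)
    (π : G → G)
    (hπQ : ∀ g : G, π g ∈ Q)
    (hπH : ∀ g : G, (π g)⁻¹ * g ∈ H)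
    (hπuniq : ∀ g : G, ∀ q ∈ Q, q⁻¹ * g ∈ H → q = π g)
    (v : G) (hv : v ∈ Q)
    (π'' : G → G)
    (hπ''Q : ∀ g : G, π'' g ∈ Q)
    (hπ''H : ∀ g : G, ∃ h ∈ H, (π'' g)⁻¹ * g = v * h * v⁻¹)
    (hπ''uniq : ∀ g : G, ∀ q ∈ Q, (∃ h ∈ H, q⁻¹ * g = v * h * v⁻¹) → q = π'' g) :
    ∀ x ∈ Q, ∀ y ∈ Q, π (π'' (x * y) * v) = π (x * π (y * v)) := by
  intro x hx y hy
  obtain ⟨h, hh, hzeq⟩ := hπ''H (x * y)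
  set z := π'' (x * y) with hz
  have h1 := hπH (x * π (y * v))
  have h2 := hπH (y * v)
  set q := π (x * π (y * v)) with hq
  have key : q⁻¹ * (z * v) ∈ H := by
    have hxy : x * y = z * (v * h * v⁻¹) := by
      rw [← hzeq]; group
    have : q⁻¹ * (z * v) = (q⁻¹ * (x * π (y * v))) * ((π (y * v))⁻¹ * (y * v)) * h⁻¹ := by
      have : z * v = x * y * v * h⁻¹ := by rw [hxy]; group
      rw [this]; group
    rw [this]
    exact mul_mem (mul_mem h1 h2) (inv_mem hh)
  exact (hπuniq (z * v) q (hπQ _) key).symm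
end

section
/- (Proposition 3.1, key identity) Let 𝔤 be a Lie algebra over a field of characteristic zero, Π : 𝔤 → 𝔤 a linear map, and R : 𝔤 × 𝔤 → 𝔤 a symmetric bilinear map. Define K(x,y) = ½Π[x,y], and the polarized cubic coefficients 2L(x,y,z) = −(1/6)Π[x,[y,z]] + Π[R(x,y),z] + (1/4)Π[x,Π[y,z]] − (1/6)Π[y,[x,z]] + Π[x,R(y,z)] + Π[y,R(x,z)] + (1/4)Π[y,Π[x,z]] and 2M(x,y,z) = (1/3)Π[y,[z,x]] + Π[x,R(y,z)] − (1/4)Π[y,Π[z,x]] + (1/3)Π[z,[y,x]] + Π[y,R(x,z)] + Π[z,R(x,y)] − (1/4)Π[z,Π[y,x]]. Then B(x,y,z) := 2L(x,y,z) − 2M(x,y,z) − K(x, K(y,z)) + K(K(x,y), z) = −½Π[[x,y],z] + ½Π[Π[x,y],z] + 2Π[R(x,y),z] for all x, y, z ∈ 𝔤. -/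
/-- Proposition 3.1, key identity: with `K(x,y) = ½Π[x,y]` and the
polarized cubic coefficients `2L`, `2M` as in the paper,
`B(x,y,z) = 2L(x,y,z) − 2M(x,y,z) − K(x,K(y,z)) + K(K(x,y),z)
          = −½Π[[x,y],z] + ½Π[Π[x,y],z] + 2Π[R(x,y),z]`. -/
theorem B_identity
    {K : Type*} [Field K] [CharZero K]
    {L : Type*} [LieRing L] [LieAlgebra K L]
    (P : L →ₗ[K] L) (R : L →ₗ[K] L →ₗ[K] L)
    (hR : ∀ x y : L, R x y = R y x)
    (x y z : L) :
    (-(1/6 : K) • P ⁅x, ⁅y, z⁆⁆ + P ⁅R x y, z⁆ + (1/4 : K) • P ⁅x, P ⁅y, z⁆⁆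
        - (1/6 : K) • P ⁅y, ⁅x, z⁆⁆ + P ⁅x, R y z⁆ + P ⁅y, R x z⁆
        + (1/4 : K) • P ⁅y, P ⁅x, z⁆⁆)
      - ((1/3 : K) • P ⁅y, ⁅z, x⁆⁆ + P ⁅x, R y z⁆ - (1/4 : K) • P ⁅y, P ⁅z, x⁆⁆
        + (1/3 : K) • P ⁅z, ⁅y, x⁆⁆ + P ⁅y, R x z⁆ + P ⁅z, R x y⁆
        - (1/4 : K) • P ⁅z, P ⁅y, x⁆⁆)
      - (1/2 : K) • P ⁅x, (1/2 : K) • P ⁅y, z⁆⁆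
      + (1/2 : K) • P ⁅(1/2 : K) • P ⁅x, y⁆, z⁆
    = -(1/2 : K) • P ⁅⁅x, y⁆, z⁆ + (1/2 : K) • P ⁅P ⁅x, y⁆, z⁆
      + (2 : K) • P ⁅R x y, z⁆ := by
  have h1 : ⁅x, ⁅y, z⁆⁆ = ⁅⁅x,y⁆,z⁆ + ⁅y,⁅x,z⁆⁆ := leibniz_lie x y z
  have h2 : ⁅z, x⁆ = -⁅x, z⁆ := (lie_skew z x).symm
  have h3 : ⁅y, x⁆ = -⁅x, y⁆ := (lie_skew y x).symm
  have h4 : ⁅z, ⁅x,y⁆⁆ = -⁅⁅x,y⁆, z⁆ := (lie_skew _ _).symm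
  have h5 : ⁅z, P ⁅x,y⁆⁆ = -⁅P ⁅x,y⁆, z⁆ := (lie_skew _ _).symm
  have h6 : ⁅z, R x y⁆ = -⁅R x y, z⁆ := (lie_skew _ _).symm
  rw [h1, h2, h3]
  simp only [lie_neg, neg_lie, lie_smul, smul_lie, map_neg, map_smul, map_add, h4, h5, h6]
  module
end

section
/- (Section 5, antisymmetrization of d) Let 𝔤 be a Lie algebra over a field of characteristic zero, Π : 𝔤 → 𝔤 a linear map, and R : 𝔤 × 𝔤 → 𝔤 a bilinear map. Define d(ξ,η,ζ,τ) = ½Π[τ,[[ξ,η],ζ]] − ½Π[τ,Π[[ξ,η],ζ]] − ½Π[τ,[Π[ξ,η],ζ]] + ½Π[τ,Π[Π[ξ,η],ζ]] − ½Π[Π[τ,[ξ,η]],ζ] + ½Π[Π[τ,Π[ξ,η]],ζ] + 2Π[τ,[R(ξ,η),ζ]] − 2Π[τ,Π[R(ξ,η),ζ]] − 2Π[Π[τ,R(ξ,η)],ζ]. Then for all ξ, η, ζ, τ ∈ 𝔤, ½(d(ξ,η,ζ,τ) − d(ξ,η,τ,ζ)) = −(1/4)Π[[ξ,η],[ζ,τ]]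 + (1/4)Π[Π[ξ,η],[ζ,τ]] − Π[R(ξ,η),[ζ,τ]]. -/
/-- Jacobi identity rearranged, pushed through a linear map. -/
private lemma aux_jacobi {K : Type*} [Field K] {L : Type*} [LieRing L] [LieAlgebra K L]
    (P : L →ₗ[K] L) (x z t : L) :
    P ⁅t, ⁅x, z⁆⁆ = P ⁅z, ⁅x, t⁆⁆ - P ⁅x, ⁅z, t⁆⁆ := by
  rw [← lie_skew t ⁅x, z⁆, lie_lie, map_neg, map_sub, neg_sub]

/-- Skew symmetry through a linear map. -/
private lemma aux_skew {K : Type*} [Field K] {L : Type*} [LieRing L] [LieAlgebra K L]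
    (P : L →ₗ[K] L) (x y z : L) :
    P ⁅P ⁅x, y⁆, z⁆ = P ⁅z, P ⁅y, x⁆⁆ := by
  rw [← lie_skew y x, map_neg, lie_neg, lie_skew]

/-- The tensor `d = ∇²b` of formula (5.6). -/
def dTensor {K : Type*} [Field K] {L : Type*} [LieRing L] [LieAlgebra K L]
    (P : L →ₗ[K] L) (R : L →ₗ[K] L →ₗ[K] L) (ξ η ζ τ : L) : L :=
  (1/2 : K) • P ⁅τ, ⁅⁅ξ, η⁆, ζ⁆⁆ - (1/2 : K) • P ⁅τ, P ⁅⁅ξ, η⁆, ζ⁆⁆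
    - (1/2 : K) • P ⁅τ, ⁅P ⁅ξ, η⁆, ζ⁆⁆ + (1/2 : K) • P ⁅τ, P ⁅P ⁅ξ, η⁆, ζ⁆⁆
    - (1/2 : K) • P ⁅P ⁅τ, ⁅ξ, η⁆⁆, ζ⁆ + (1/2 : K) • P ⁅P ⁅τ, P ⁅ξ, η⁆⁆, ζ⁆
    + (2 : K) • P ⁅τ, ⁅R ξ η, ζ⁆⁆ - (2 : K) • P ⁅τ, P ⁅R ξ η, ζ⁆⁆
    - (2 : K) • P ⁅P ⁅τ, R ξ η⁆, ζ⁆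

/-- Section 5, antisymmetrization of `d`:
`½(d(ξ,η,ζ,τ) − d(ξ,η,τ,ζ)) = −¼Π[[ξ,η],[ζ,τ]] + ¼Π[Π[ξ,η],[ζ,τ]] − Π[R(ξ,η),[ζ,τ]]`. -/
theorem d_antisymmetrization
    {K : Type*} [Field K] [CharZero K]
    {L : Type*} [LieRing L] [LieAlgebra K L]
    (P : L →ₗ[K] L) (R : L →ₗ[K] L →ₗ[K] L)
    (ξ η ζ τ : L) :
    (1/2 : K) • (dTensor P R ξ η ζ τ - dTensor P R ξ η τ ζ)
      = -(1/4 : K) • P ⁅⁅ξ, η⁆, ⁅ζ, τ⁆⁆ + (1/4 : K) • P ⁅P ⁅ξ, η⁆, ⁅ζ, τ⁆⁆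
        - P ⁅R ξ η, ⁅ζ, τ⁆⁆ := by
  simp only [dTensor]
  rw [aux_jacobi P ⁅ξ, η⁆ ζ τ, aux_jacobi P (P ⁅ξ, η⁆) ζ τ, aux_jacobi P (R ξ η) ζ τ,
    aux_skew P τ ⁅ξ, η⁆ ζ, aux_skew P ζ ⁅ξ, η⁆ τ,
    aux_skew P τ (P ⁅ξ, η⁆) ζ, aux_skew P ζ (P ⁅ξ, η⁆) τ,
    aux_skew P τ (R ξ η) ζ, aux_skew P ζ (R ξ η) τ]
  module
end

section
/- (Section 6, symmetrization of d for hexagonal loops) Let 𝔤 be a Lie algebra over a field of characteristic zero, Π : 𝔤 → 𝔤 a linear map, and R : 𝔤 × 𝔤 → 𝔤 a symmetric bilinear map satisfying the hexagonality condition Π[R(ξ,η),ζ] + Π[R(η,ζ),ξ] + Π[R(ζ,ξ),η] = 0 for all ξ, η, ζ ∈ 𝔤. Define d(ξ,η,ζ,τ) by formula (5.6): d(ξ,η,ζ,τ) = ½Π[τ,[[ξ,η],ζ]] − ½Π[τ,Π[[ξ,η],ζ]] − ½Π[τ,[Π[ξ,η],ζ]] + ½Π[τ,Π[Π[ξ,η],ζ]]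 − ½Π[Π[τ,[ξ,η]],ζ] + ½Π[Π[τ,Π[ξ,η]],ζ] + 2Π[τ,[R(ξ,η),ζ]] − 2Π[τ,Π[R(ξ,η),ζ]] − 2Π[Π[τ,R(ξ,η)],ζ]. Then for all x₁, x₂, x₃, τ ∈ 𝔤, the sum of d(x_{σ(1)}, x_{σ(2)}, x_{σ(3)}, τ) over all six permutations σ of {1,2,3} equals 4 times the cyclic sum over (x₁,x₂,x₃) of (Π[τ,[R(x₁,x₂),x₃]] − Π[Π[τ,R(x₁,x₂)],x₃]). In particular, the symmetrization of d over its first three arguments vanishes if and only if the cyclic sum of Π[τ,[R(ξ,η),ζ]] − Π[Π[τ,R(ξ,η)],ζ] over ξ, η, ζ vanishes. -/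
/-- Auxiliary: the main symmetrization identity. -/
theorem dTensor_symmetrization_eq
    {K : Type*} [Field K] [CharZero K]
    {L : Type*} [LieRing L] [LieAlgebra K L]
    (P : L →ₗ[K] L) (R : L →ₗ[K] L →ₗ[K] L)
    (hR : ∀ x y : L, R x y = R y x)
    (hhex : ∀ ξ η ζ : L, P ⁅R ξ η, ζ⁆ + P ⁅R η ζ, ξ⁆ + P ⁅R ζ ξ, η⁆ = 0) :
    ∀ x₁ x₂ x₃ τ : L,
      dTensor P R x₁ x₂ x₃ τ + dTensor P R x₁ x₃ x₂ τ + dTensor P R x₂ x₁ x₃ τ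
        + dTensor P R x₂ x₃ x₁ τ + dTensor P R x₃ x₁ x₂ τ + dTensor P R x₃ x₂ x₁ τ
      = (4 : K) • ((P ⁅τ, ⁅R x₁ x₂, x₃⁆⁆ - P ⁅P ⁅τ, R x₁ x₂⁆, x₃⁆)
          + (P ⁅τ, ⁅R x₂ x₃, x₁⁆⁆ - P ⁅P ⁅τ, R x₂ x₃⁆, x₁⁆)
          + (P ⁅τ, ⁅R x₃ x₁, x₂⁆⁆ - P ⁅P ⁅τ, R x₃ x₁⁆, x₂⁆)) := by
  intro x₁ x₂ x₃ τ
  have hsub : P ⁅R x₁ x₃, x₂⁆ = -P ⁅R x₁ x₂, x₃⁆ - P ⁅R x₂ x₃, x₁⁆ := by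
    have h := hhex x₁ x₂ x₃
    rw [hR x₃ x₁] at h
    rw [← neg_eq_of_add_eq_zero_right h]
    abel
  simp only [dTensor, hR x₂ x₁, hR x₃ x₁, hR x₃ x₂,
    (lie_skew x₂ x₁).symm, (lie_skew x₃ x₁).symm, (lie_skew x₃ x₂).symm]
  simp only [map_neg, lie_neg, neg_lie, smul_neg, neg_neg, hsub, map_sub, lie_sub, sub_lie,
    map_neg, neg_sub]
  module

/-- Section 6, symmetrization of `d` for hexagonal loops: under the
hexagonality condition (6.1), the symmetrization of `d` over its first three
arguments equals `4` times the cyclic sum of `Π[τ,[R(x₁,x₂),x₃]] − Π[Π[τ,R(x₁,x₂)],x₃]`;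
in particular it vanishes iff that cyclic sum vanishes. -/
theorem d_symmetrization_hexagonal
    {K : Type*} [Field K] [CharZero K]
    {L : Type*} [LieRing L] [LieAlgebra K L]
    (P : L →ₗ[K] L) (R : L →ₗ[K] L →ₗ[K] L)
    (hR : ∀ x y : L, R x y = R y x)
    (hhex : ∀ ξ η ζ : L, P ⁅R ξ η, ζ⁆ + P ⁅R η ζ, ξ⁆ + P ⁅R ζ ξ, η⁆ = 0) :
    (∀ x₁ x₂ x₃ τ : L,
      dTensor P R x₁ x₂ x₃ τ + dTensor P R x₁ x₃ x₂ τ + dTensor P R x₂ x₁ x₃ τ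
        + dTensor P R x₂ x₃ x₁ τ + dTensor P R x₃ x₁ x₂ τ + dTensor P R x₃ x₂ x₁ τ
      = (4 : K) • ((P ⁅τ, ⁅R x₁ x₂, x₃⁆⁆ - P ⁅P ⁅τ, R x₁ x₂⁆, x₃⁆)
          + (P ⁅τ, ⁅R x₂ x₃, x₁⁆⁆ - P ⁅P ⁅τ, R x₂ x₃⁆, x₁⁆)
          + (P ⁅τ, ⁅R x₃ x₁, x₂⁆⁆ - P ⁅P ⁅τ, R x₃ x₁⁆, x₂⁆))) ∧
    ((∀ x₁ x₂ x₃ τ : L,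
        dTensor P R x₁ x₂ x₃ τ + dTensor P R x₁ x₃ x₂ τ + dTensor P R x₂ x₁ x₃ τ
          + dTensor P R x₂ x₃ x₁ τ + dTensor P R x₃ x₁ x₂ τ + dTensor P R x₃ x₂ x₁ τ
          = 0)
      ↔ (∀ ξ η ζ τ : L,
          (P ⁅τ, ⁅R ξ η, ζ⁆⁆ - P ⁅P ⁅τ, R ξ η⁆, ζ⁆)
            + (P ⁅τ, ⁅R η ζ, ξ⁆⁆ - P ⁅P ⁅τ, R η ζ⁆, ξ⁆)
            + (P ⁅τ, ⁅R ζ ξ, η⁆⁆ - P ⁅P ⁅τ, R ζ ξ⁆, η⁆) = 0)) := by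
  have main := dTensor_symmetrization_eq P R hR hhex
  refine ⟨main, ?_, ?_⟩
  · intro h0 ξ η ζ τ
    have h4 : (4 : K) • ((P ⁅τ, ⁅R ξ η, ζ⁆⁆ - P ⁅P ⁅τ, R ξ η⁆, ζ⁆)
        + (P ⁅τ, ⁅R η ζ, ξ⁆⁆ - P ⁅P ⁅τ, R η ζ⁆, ξ⁆)
        + (P ⁅τ, ⁅R ζ ξ, η⁆⁆ - P ⁅P ⁅τ, R ζ ξ⁆, η⁆)) = 0 := by
      rw [← main ξ η ζ τ]; exact h0 ξ η ζ τ
    rcases smul_eq_zero.mp h4 with h | h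
    · exact absurd h (by norm_num)
    · exact h
  · intro hc x₁ x₂ x₃ τ
    rw [main x₁ x₂ x₃ τ, hc x₁ x₂ x₃ τ, smul_zero]
end
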